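/- Let Γ be a ring, I a Γ-module, Λ = End_Γ(I), and J a Γ-module lying in add I (i.e. a direct summand of I^n for some n ≥ 0). Then for every Γ-module P the natural evaluation map Hom_Γ(P, J) → Hom_Λ(Hom_Γ(J, I), Hom_Γ(P, I)), sending f to the map g ↦ g ∘ f, is bijective, where Hom_Γ(J, I) and Hom_Γ(P, I) are left Λ-modules via post-composition. -/
import Mathlib


/-!
Statement 16: Let `Γ` be a ring, `I` a `Γ`-module, `Λ = End_Γ(I)`, and `J ∈ add I`.
Then for every `Γ`-module `P`, the evaluation map
`Hom_Γ(P, J) → Hom_Λ(Hom_Γ(J, I), Hom_Γ(P, I))`, `f ↦ (g ↦ g ∘ f)`, is bijective.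
(A homomorphism of left `Λ`-modules `Hom_Γ(J, I) → Hom_Γ(P, I)` is an additive map
commuting with the `Λ`-action `λ • φ = λ ∘ φ`.)
-/

universe u

namespace AuslanderIyamaStmt16

open LinearMap

/-- `X` belongs to `add I`: `X` is a direct summand of a finite direct power of `I`. -/
def inAdd (Γ : Type u) [Ring Γ] (I : Type u) [AddCommGroup I] [Module Γ I]
    (X : Type u) [AddCommGroup X] [Module Γ X] : Prop :=
  ∃ (n : ℕ) (s : X →ₗ[Γ] (Fin n → I)) (r : (Fin n → I) →ₗ[Γ] X),
    r ∘ₗ s = LinearMap.id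

theorem statement16 (Γ : Type u) [Ring Γ]
    (I : Type u) [AddCommGroup I] [Module Γ I]
    (J : Type u) [AddCommGroup J] [Module Γ J] (hJ : inAdd Γ I J)
    (P : Type u) [AddCommGroup P] [Module Γ P] :
    -- injectivity of `f ↦ (g ↦ g ∘ f)`
    (∀ f f' : P →ₗ[Γ] J, (∀ g : J →ₗ[Γ] I, g ∘ₗ f = g ∘ₗ f') → f = f') ∧
    -- surjectivity onto the `Λ`-homomorphisms, where `Λ = End_Γ(I)` acts by
    -- post-composition
    ∀ θ : (J →ₗ[Γ] I) →+ (P →ₗ[Γ] I),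
      (∀ (lam : Module.End Γ I) (g : J →ₗ[Γ] I), θ (lam ∘ₗ g) = lam ∘ₗ θ g) →
      ∃ f : P →ₗ[Γ] J, ∀ g : J →ₗ[Γ] I, θ g = g ∘ₗ f := by
  obtain ⟨n, s, r, hrs⟩ := hJ
  constructor
  · intro f f' h
    have hs : ∀ x : P, s (f x) = s (f' x) := by
      intro x
      funext i
      have := congrArg (fun φ : P →ₗ[Γ] I => φ x) (h (LinearMap.proj i ∘ₗ s))
      simpa using this
    ext x
    have h1 : f x = r (s (f x)) := by
      have := congrArg (fun φ : J →ₗ[Γ] J => φ (f x)) hrs.symm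
      simpa using this
    have h2 : f' x = r (s (f' x)) := by
      have := congrArg (fun φ : J →ₗ[Γ] J => φ (f' x)) hrs.symm
      simpa using this
    rw [h1, h2, hs x]
  · intro θ hθ
    refine ⟨r ∘ₗ LinearMap.pi (fun i => θ (LinearMap.proj i ∘ₗ s)), ?_⟩
    intro g
    have hsum : ∑ i : Fin n,
        ((g ∘ₗ r ∘ₗ LinearMap.single Γ (fun _ : Fin n => I) i) ∘ₗ
          (LinearMap.proj i ∘ₗ s)) = g := by
      ext x
      have : ∑ i : Fin n, g (r (Pi.single i (s x i))) = g (r (∑ i : Fin n, Pi.single i (s x i))) := by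
        rw [map_sum, map_sum]
      simp only [LinearMap.coe_sum, Finset.sum_apply, LinearMap.comp_apply,
        LinearMap.proj_apply, LinearMap.single_apply]
      rw [this, Finset.univ_sum_single]
      have := congrArg (fun φ : J →ₗ[Γ] J => g (φ x)) hrs
      simpa using this
    calc θ g = θ (∑ i : Fin n,
        ((g ∘ₗ r ∘ₗ LinearMap.single Γ (fun _ : Fin n => I) i) ∘ₗ
          (LinearMap.proj i ∘ₗ s))) := by rw [hsum]
      _ = ∑ i : Fin n, (g ∘ₗ r ∘ₗ LinearMap.single Γ (fun _ : Fin n => I) i) ∘ₗ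
          θ (LinearMap.proj i ∘ₗ s) := by
        rw [map_sum]
        exact Finset.sum_congr rfl fun i _ => hθ _ _
      _ = g ∘ₗ (r ∘ₗ LinearMap.pi (fun i => θ (LinearMap.proj i ∘ₗ s))) := by
        ext x
        simp only [LinearMap.coe_sum, Finset.sum_apply, LinearMap.comp_apply,
          LinearMap.single_apply, LinearMap.pi_apply]
        rw [← map_sum g, ← map_sum r]
        congr 1
        exact congrArg r (Finset.univ_sum_single _)

end AuslanderIyamaStmt16
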